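/- Let 𝕜 be ℝ or ℂ, V an inner product space over 𝕜, and φ : V →ₗ[𝕜] V a finite potent endomorphism. Then there exists a core inverse of φ if and only if φ has index at most 1, i.e. IsCompl (LinearMap.range φ) (LinearMap.ker φ). -/

import Mathlib

private lemma core_aux_fd {𝕜 : Type*} [RCLike 𝕜] {V : Type*} [NormedAddCommGroup V]
    [InnerProductSpace 𝕜 V] (φ : V →ₗ[𝕜] V)
    (hfp : ∃ n : ℕ, FiniteDimensional 𝕜 (LinearMap.range (φ ^ n)))
    (hmap : Submodule.map φ (LinearMap.range φ) = LinearMap.range φ) :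
    FiniteDimensional 𝕜 (LinearMap.range φ) := by
  have key : ∀ n : ℕ, Submodule.map (φ ^ n) (LinearMap.range φ) = LinearMap.range φ := by
    intro n
    induction n with
    | zero => simp [Module.End.one_eq_id]
    | succ n ih =>
      rw [pow_succ, Module.End.mul_eq_comp, Submodule.map_comp, hmap, ih]
  obtain ⟨n, hn⟩ := hfp
  have hle : LinearMap.range φ ≤ LinearMap.range (φ ^ n) := by
    rw [← key n]
    exact LinearMap.map_le_range
  exact Submodule.finiteDimensional_of_le hle

theorem core_stmt6 {𝕜 : Type*} [RCLike 𝕜] {V : Type*} [NormedAddCommGroup V]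
    [InnerProductSpace 𝕜 V] (φ : V →ₗ[𝕜] V)
    (hfp : ∃ n : ℕ, FiniteDimensional 𝕜 (LinearMap.range (φ ^ n))) :
    (∃ X : V →ₗ[𝕜] V, (∀ v : V, v - φ (X v) ∈ (LinearMap.range φ)ᗮ) ∧
        LinearMap.range X ≤ LinearMap.range φ) ↔
      IsCompl (LinearMap.range φ) (LinearMap.ker φ) := by
  set K := LinearMap.range φ with hK
  have hmem : ∀ x ∈ K, φ x ∈ K := fun x _ => LinearMap.mem_range_self φ x
  set f : K →ₗ[𝕜] K := φ.restrict hmem with hf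
  have hfapp : ∀ w : K, (f w : V) = φ (w : V) := fun w => rfl
  constructor
  · rintro ⟨X, hX1, hX2⟩
    -- step 1: φ ∘ X fixes K
    have step1 : ∀ v ∈ K, φ (X v) = v := by
      intro v hv
      have h1 : v - φ (X v) ∈ K := Submodule.sub_mem K hv (LinearMap.mem_range_self φ (X v))
      have h3 : (inner 𝕜 (v - φ (X v)) (v - φ (X v)) : 𝕜) = 0 :=
        (Submodule.mem_orthogonal K _).mp (hX1 v) _ h1
      have h4 : v - φ (X v) = 0 := inner_self_eq_zero.mp h3
      have := sub_eq_zero.mp h4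
      exact this.symm
    -- step 2: φ maps K onto K
    have hmap : Submodule.map φ K = K := by
      refine le_antisymm LinearMap.map_le_range ?_
      intro v hv
      exact ⟨X v, hX2 (LinearMap.mem_range_self X v), step1 v hv⟩
    haveI : FiniteDimensional 𝕜 K := core_aux_fd φ hfp hmap
    -- f surjective hence injective
    have hsurj : Function.Surjective f := by
      rintro ⟨y, hy⟩
      rw [← hmap] at hy
      obtain ⟨x, hx, rfl⟩ := hy
      exact ⟨⟨x, hx⟩, rfl⟩
    have hinj : Function.Injective f := LinearMap.injective_iff_surjective.mpr hsurj
    constructor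
    · rw [Submodule.disjoint_def]
      intro v hvr hvk
      have h0 : f ⟨v, hvr⟩ = 0 := by
        apply Subtype.ext
        simpa [hfapp] using (LinearMap.mem_ker.mp hvk)
      have : (⟨v, hvr⟩ : K) = 0 := hinj (by simpa using h0)
      simpa using congrArg Subtype.val this
    · rw [codisjoint_iff, Submodule.eq_top_iff']
      intro v
      have : φ v ∈ Submodule.map φ K := by rw [hmap]; exact LinearMap.mem_range_self φ v
      obtain ⟨u, hu, huv⟩ := this
      refine Submodule.mem_sup.mpr ⟨u, hu, v - u, ?_, by abel⟩
      rw [LinearMap.mem_ker, map_sub, huv, sub_self]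
  · intro hc
    have hmap : Submodule.map φ K = K := by
      refine le_antisymm LinearMap.map_le_range ?_
      rintro y ⟨v, rfl⟩
      have hv : v ∈ K ⊔ LinearMap.ker φ := by
        rw [codisjoint_iff.mp hc.codisjoint]; trivial
      obtain ⟨r, hr, k, hk, rfl⟩ := Submodule.mem_sup.mp hv
      have : φ (r + k) = φ r := by
        rw [map_add, LinearMap.mem_ker.mp hk, add_zero]
      rw [this]
      exact ⟨r, hr, rfl⟩
    haveI : FiniteDimensional 𝕜 K := core_aux_fd φ hfp hmap
    have hsurj : Function.Surjective f := by
      rintro ⟨y, hy⟩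
      rw [← hmap] at hy
      obtain ⟨x, hx, rfl⟩ := hy
      exact ⟨⟨x, hx⟩, rfl⟩
    have hinj : Function.Injective f := by
      rintro ⟨a, ha⟩ ⟨b, hb⟩ hab
      have h1 : φ (a - b) = 0 := by
        have := congrArg Subtype.val hab
        simp only [hfapp] at this
        rw [map_sub, this, sub_self]
      have h2 : a - b ∈ K ⊓ LinearMap.ker φ :=
        ⟨Submodule.sub_mem K ha hb, LinearMap.mem_ker.mpr h1⟩
      have h3 : a - b = 0 := Submodule.disjoint_def.mp hc.disjoint _ h2.1 h2.2
      exact Subtype.ext (sub_eq_zero.mp h3)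
    set e := LinearEquiv.ofBijective f ⟨hinj, hsurj⟩ with he
    haveI : Submodule.HasOrthogonalProjection K := inferInstance
    set P : V →ₗ[𝕜] K := (Submodule.orthogonalProjectionOnto K : V →L[𝕜] K).toLinearMap with hP
    refine ⟨K.subtype ∘ₗ (e.symm : K →ₗ[𝕜] K) ∘ₗ P, ?_, ?_⟩
    · intro v
      have hphi : φ ((K.subtype ∘ₗ (e.symm : K →ₗ[𝕜] K) ∘ₗ P) v) = (P v : V) := by
        have : φ ((e.symm (P v) : K) : V) = (f (e.symm (P v)) : V) := rfl
        simp only [LinearMap.comp_apply, Submodule.coe_subtype, this]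
        exact congrArg Subtype.val (e.apply_symm_apply (P v))
      rw [hphi]
      exact Submodule.sub_starProjection_mem_orthogonal v
    · rintro x ⟨v, rfl⟩
      exact Subtype.coe_prop _
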